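/- Let ℓ > 1 and p ≥ 3. The algebra given by the quiver with vertex set ℤ/ℓ × ℤ/p, arrows a_{ij}: (i,j) → (i+1, j+ξ) and b_{ij}: (i,j) → (i, j+1) (for a fixed ξ ∈ ℤ/p), and relations b_{i+1,j+ξ} a_{ij} = a_{i,j+1} b_{ij}, a_{i+ℓ−1, j+(ℓ−1)ξ} ⋯ a_{ij} = 0, b_{i,j+p−1} ⋯ b_{ij} = 0, has dimension ℓ·p·ℓ·p = ℓ²p² over the base field. -/

import Mathlib

/-!
STATEMENT 14: The bound quiver algebra of U_ζ(B₁) for sl₂ has dimension ℓ²p².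

The quiver has vertex set ℤ/ℓ × ℤ/p, arrows a_{ij} : (i,j) → (i+1,j+ξ) and
b_{ij} : (i,j) → (i,j+1), and relations
  b_{i+1,j+ξ} a_{ij} = a_{i,j+1} b_{ij},
  a_{i+ℓ−1,j+(ℓ−1)ξ} ⋯ a_{ij} = 0,  b_{i,j+p−1} ⋯ b_{ij} = 0.
We present the path algebra with relations as the quotient (via `RingQuot`) of the free
algebra on generators `e v` (paths of length zero), `a v`, `b v` by the path-algebra
relations (orthogonal idempotents summing to 1, source/target conditions for the arrows)
together with the three families of relations above.  Composition of paths is written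
multiplicatively; paths of a's are `aPath`, paths of b's are `bPath`.
-/

namespace Stmt14

variable (k : Type*) [Field k] (ℓ p : ℕ) [NeZero ℓ] [NeZero p] (ξ : ZMod p)

/-- Generators of the path algebra: vertex idempotents and the two families of arrows. -/
inductive Gen (ℓ p : ℕ) : Type
  | e : ZMod ℓ × ZMod p → Gen ℓ p
  | a : ZMod ℓ × ZMod p → Gen ℓ p
  | b : ZMod ℓ × ZMod p → Gen ℓ p

open FreeAlgebra

/-- The generator `x` as an element of the free algebra. -/
noncomputable def g (x : Gen ℓ p) : FreeAlgebra k (Gen ℓ p) := FreeAlgebra.ι k x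

/-- The path a_{v + (s-1)·(1,ξ)} ⋯ a_v of length `s` starting at `v`. -/
noncomputable def aPath : ℕ → ZMod ℓ × ZMod p → FreeAlgebra k (Gen ℓ p)
  | 0, v => g k ℓ p (Gen.e v)
  | s + 1, v => g k ℓ p (Gen.a (v + ((s : ZMod ℓ), (s : ZMod p) * ξ))) * aPath s v

/-- The path b_{v + (0,s-1)} ⋯ b_v of length `s` starting at `v`. -/
noncomputable def bPath : ℕ → ZMod ℓ × ZMod p → FreeAlgebra k (Gen ℓ p)
  | 0, v => g k ℓ p (Gen.e v)
  | s + 1, v => g k ℓ p (Gen.b (v + (0, (s : ZMod p)))) * bPath s v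

/-- The defining relations of the bound quiver algebra. -/
inductive Rel : FreeAlgebra k (Gen ℓ p) → FreeAlgebra k (Gen ℓ p) → Prop
  /-- The `e v` are orthogonal idempotents. -/
  | orth : ∀ v w, v ≠ w → Rel (g k ℓ p (Gen.e v) * g k ℓ p (Gen.e w)) 0
  | idem : ∀ v, Rel (g k ℓ p (Gen.e v) * g k ℓ p (Gen.e v)) (g k ℓ p (Gen.e v))
  /-- The vertex idempotents sum to 1. -/
  | unit : Rel (∑ v : ZMod ℓ × ZMod p, g k ℓ p (Gen.e v)) 1
  /-- `a v` is an arrow from `v` to `v + (1, ξ)`. -/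
  | aArrow : ∀ v, Rel (g k ℓ p (Gen.a v))
      (g k ℓ p (Gen.e (v + (1, ξ))) * g k ℓ p (Gen.a v) * g k ℓ p (Gen.e v))
  /-- `b v` is an arrow from `v` to `v + (0, 1)`. -/
  | bArrow : ∀ v, Rel (g k ℓ p (Gen.b v))
      (g k ℓ p (Gen.e (v + (0, 1))) * g k ℓ p (Gen.b v) * g k ℓ p (Gen.e v))
  /-- Commutativity relation b_{i+1,j+ξ} a_{ij} = a_{i,j+1} b_{ij}. -/
  | comm : ∀ v, Rel (g k ℓ p (Gen.b (v + (1, ξ))) * g k ℓ p (Gen.a v))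
      (g k ℓ p (Gen.a (v + (0, 1))) * g k ℓ p (Gen.b v))
  /-- Paths of a's of length ℓ vanish. -/
  | aNil : ∀ v, Rel (aPath k ℓ p ξ ℓ v) 0
  /-- Paths of b's of length p vanish. -/
  | bNil : ∀ v, Rel (bPath k ℓ p p v) 0

/-- The bound quiver algebra `kQ/I`. -/
noncomputable abbrev BoundQuiverAlgebra : Type _ := RingQuot (Rel k ℓ p ξ)

end Stmt14

namespace Stmt14

variable (k : Type*) [Field k] (ℓ p : ℕ) [NeZero ℓ] [NeZero p] (ξ : ZMod p)

noncomputable def π : FreeAlgebra k (Gen ℓ p) →ₐ[k] BoundQuiverAlgebra k ℓ p ξ :=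
  RingQuot.mkAlgHom k (Rel k ℓ p ξ)

noncomputable def Ee (v : ZMod ℓ × ZMod p) : BoundQuiverAlgebra k ℓ p ξ :=
  π k ℓ p ξ (g k ℓ p (Gen.e v))

noncomputable def Aa (v : ZMod ℓ × ZMod p) : BoundQuiverAlgebra k ℓ p ξ :=
  π k ℓ p ξ (g k ℓ p (Gen.a v))

noncomputable def Bb (v : ZMod ℓ × ZMod p) : BoundQuiverAlgebra k ℓ p ξ :=
  π k ℓ p ξ (g k ℓ p (Gen.b v))

noncomputable def aP (n : ℕ) (v : ZMod ℓ × ZMod p) : BoundQuiverAlgebra k ℓ p ξ :=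
  π k ℓ p ξ (aPath k ℓ p ξ n v)

noncomputable def bP (n : ℕ) (v : ZMod ℓ × ZMod p) : BoundQuiverAlgebra k ℓ p ξ :=
  π k ℓ p ξ (bPath k ℓ p n v)

variable {k ℓ p ξ}

lemma rel_eq {x y : FreeAlgebra k (Gen ℓ p)} (h : Rel k ℓ p ξ x y) :
    π k ℓ p ξ x = π k ℓ p ξ y := RingQuot.mkAlgHom_rel k h

-- vertex arithmetic helper
omit [NeZero ℓ] [NeZero p] in
lemma addpair (v : ZMod ℓ × ZMod p) (a c : ZMod ℓ) (b d : ZMod p) :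
    v + (a, b) + (c, d) = v + (a + c, b + d) := by
  simp [Prod.ext_iff, add_assoc]

lemma Ee_mul_Ee_self (v : ZMod ℓ × ZMod p) :
    Ee k ℓ p ξ v * Ee k ℓ p ξ v = Ee k ℓ p ξ v := by
  rw [Ee, ← map_mul]; exact rel_eq (Rel.idem v)

lemma Ee_mul_Ee_ne {v w : ZMod ℓ × ZMod p} (h : v ≠ w) :
    Ee k ℓ p ξ v * Ee k ℓ p ξ w = 0 := by
  rw [Ee, Ee, ← map_mul]
  have := rel_eq (k := k) (ξ := ξ) (Rel.orth v w h)
  simpa using this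

lemma sum_Ee : (∑ v : ZMod ℓ × ZMod p, Ee k ℓ p ξ v) = 1 := by
  have := rel_eq (@Rel.unit k _ ℓ p _ _ ξ)
  simp only [map_sum, map_one] at this
  exact this

lemma Aa_eq (v : ZMod ℓ × ZMod p) :
    Aa k ℓ p ξ v = Ee k ℓ p ξ (v + (1, ξ)) * Aa k ℓ p ξ v * Ee k ℓ p ξ v := by
  rw [Aa, Ee, Ee, ← map_mul, ← map_mul]; exact rel_eq (Rel.aArrow v)

lemma Bb_eq (v : ZMod ℓ × ZMod p) :
    Bb k ℓ p ξ v = Ee k ℓ p ξ (v + (0, 1)) * Bb k ℓ p ξ v * Ee k ℓ p ξ v := by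
  rw [Bb, Ee, Ee, ← map_mul, ← map_mul]; exact rel_eq (Rel.bArrow v)

lemma comm_gen (v : ZMod ℓ × ZMod p) :
    Bb k ℓ p ξ (v + (1, ξ)) * Aa k ℓ p ξ v = Aa k ℓ p ξ (v + (0, 1)) * Bb k ℓ p ξ v := by
  rw [Bb, Aa, Aa, Bb, ← map_mul, ← map_mul]; exact rel_eq (Rel.comm v)

lemma Ee_mul_Aa (v : ZMod ℓ × ZMod p) :
    Ee k ℓ p ξ (v + (1, ξ)) * Aa k ℓ p ξ v = Aa k ℓ p ξ v := by
  conv_lhs => rw [Aa_eq v]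
  simp only [← mul_assoc]
  rw [Ee_mul_Ee_self]
  exact (Aa_eq v).symm

lemma Aa_mul_Ee (v : ZMod ℓ × ZMod p) :
    Aa k ℓ p ξ v * Ee k ℓ p ξ v = Aa k ℓ p ξ v := by
  conv_lhs => rw [Aa_eq v]
  rw [mul_assoc, Ee_mul_Ee_self]
  exact (Aa_eq v).symm

lemma Ee_mul_Bb (v : ZMod ℓ × ZMod p) :
    Ee k ℓ p ξ (v + (0, 1)) * Bb k ℓ p ξ v = Bb k ℓ p ξ v := by
  conv_lhs => rw [Bb_eq v]
  simp only [← mul_assoc]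
  rw [Ee_mul_Ee_self]
  exact (Bb_eq v).symm

lemma Bb_mul_Ee (v : ZMod ℓ × ZMod p) :
    Bb k ℓ p ξ v * Ee k ℓ p ξ v = Bb k ℓ p ξ v := by
  conv_lhs => rw [Bb_eq v]
  rw [mul_assoc, Ee_mul_Ee_self]
  exact (Bb_eq v).symm

lemma aP_zero_eq (v : ZMod ℓ × ZMod p) : aP k ℓ p ξ 0 v = Ee k ℓ p ξ v := rfl

lemma aP_succ (n : ℕ) (v : ZMod ℓ × ZMod p) :
    aP k ℓ p ξ (n + 1) v
      = Aa k ℓ p ξ (v + ((n : ZMod ℓ), (n : ZMod p) * ξ)) * aP k ℓ p ξ n v := by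
  rw [aP, aPath, map_mul]; rfl

lemma bP_zero_eq (v : ZMod ℓ × ZMod p) : bP k ℓ p ξ 0 v = Ee k ℓ p ξ v := rfl

lemma bP_succ (n : ℕ) (v : ZMod ℓ × ZMod p) :
    bP k ℓ p ξ (n + 1) v = Bb k ℓ p ξ (v + (0, (n : ZMod p))) * bP k ℓ p ξ n v := by
  rw [bP, bPath, map_mul]; rfl

lemma Ee_mul_aP (n : ℕ) (v : ZMod ℓ × ZMod p) :
    Ee k ℓ p ξ (v + ((n : ZMod ℓ), (n : ZMod p) * ξ)) * aP k ℓ p ξ n v = aP k ℓ p ξ n v := by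
  induction n with
  | zero =>
      simp only [Nat.cast_zero, zero_mul, aP_zero_eq]
      rw [show v + ((0 : ZMod ℓ), (0 : ZMod p)) = v by simp, Ee_mul_Ee_self]
  | succ n ih =>
      rw [aP_succ, ← mul_assoc]
      have h1 : v + (((n + 1 : ℕ) : ZMod ℓ), ((n + 1 : ℕ) : ZMod p) * ξ)
          = v + ((n : ZMod ℓ), (n : ZMod p) * ξ) + (1, ξ) := by
        rw [addpair]; push_cast; rw [add_mul, one_mul]
      rw [h1, Ee_mul_Aa]

lemma aP_mul_Ee (n : ℕ) (v : ZMod ℓ × ZMod p) :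
    aP k ℓ p ξ n v * Ee k ℓ p ξ v = aP k ℓ p ξ n v := by
  induction n with
  | zero => rw [aP_zero_eq, Ee_mul_Ee_self]
  | succ n ih => rw [aP_succ, mul_assoc, ih]

lemma Ee_mul_bP (n : ℕ) (v : ZMod ℓ × ZMod p) :
    Ee k ℓ p ξ (v + (0, (n : ZMod p))) * bP k ℓ p ξ n v = bP k ℓ p ξ n v := by
  induction n with
  | zero =>
      simp only [Nat.cast_zero, bP_zero_eq]
      rw [show v + ((0 : ZMod ℓ), (0 : ZMod p)) = v by simp, Ee_mul_Ee_self]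
  | succ n ih =>
      rw [bP_succ, ← mul_assoc]
      have h1 : v + ((0 : ZMod ℓ), ((n + 1 : ℕ) : ZMod p))
          = v + ((0 : ZMod ℓ), (n : ZMod p)) + (0, 1) := by
        rw [addpair]; push_cast; rw [add_zero]
      rw [h1, Ee_mul_Bb]

lemma bP_mul_Ee (n : ℕ) (v : ZMod ℓ × ZMod p) :
    bP k ℓ p ξ n v * Ee k ℓ p ξ v = bP k ℓ p ξ n v := by
  induction n with
  | zero => rw [bP_zero_eq, Ee_mul_Ee_self]
  | succ n ih => rw [bP_succ, mul_assoc, ih]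

end Stmt14

namespace Stmt14

variable {k : Type*} [Field k] {ℓ p : ℕ} [NeZero ℓ] [NeZero p] {ξ : ZMod p}

omit [NeZero ℓ] [NeZero p] in
lemma vadd_eq (v : ZMod ℓ × ZMod p) {a c : ZMod ℓ} {b d : ZMod p} (h1 : a = c) (h2 : b = d) :
    v + (a, b) = v + (c, d) := by rw [h1, h2]

lemma aP_concat (m n : ℕ) (v : ZMod ℓ × ZMod p) :
    aP k ℓ p ξ m (v + ((n : ZMod ℓ), (n : ZMod p) * ξ)) * aP k ℓ p ξ n v
      = aP k ℓ p ξ (m + n) v := by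
  induction m with
  | zero => rw [aP_zero_eq, Ee_mul_aP, Nat.zero_add]
  | succ m ih =>
      rw [aP_succ, mul_assoc, ih, show m + 1 + n = (m + n) + 1 from by omega, aP_succ]
      congr 2
      simp only [addpair]
      exact vadd_eq v (by push_cast; ring) (by push_cast; ring)

lemma bP_concat (m n : ℕ) (v : ZMod ℓ × ZMod p) :
    bP k ℓ p ξ m (v + ((0 : ZMod ℓ), (n : ZMod p))) * bP k ℓ p ξ n v
      = bP k ℓ p ξ (m + n) v := by
  induction m with
  | zero => rw [bP_zero_eq, Ee_mul_bP, Nat.zero_add]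
  | succ m ih =>
      rw [bP_succ, mul_assoc, ih, show m + 1 + n = (m + n) + 1 from by omega, bP_succ]
      congr 2
      simp only [addpair]
      exact vadd_eq v (by push_cast; ring) (by push_cast; ring)

lemma aP_eq_zero {n : ℕ} (h : ℓ ≤ n) (v : ZMod ℓ × ZMod p) : aP k ℓ p ξ n v = 0 := by
  obtain ⟨m, rfl⟩ : ∃ m, n = m + ℓ := ⟨n - ℓ, by omega⟩
  have hz : aP k ℓ p ξ ℓ v = 0 := by
    have := rel_eq (@Rel.aNil k _ ℓ p _ _ ξ v)
    simpa [aP] using this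
  rw [← aP_concat m ℓ v, hz, mul_zero]

lemma bP_eq_zero {n : ℕ} (h : p ≤ n) (v : ZMod ℓ × ZMod p) : bP k ℓ p ξ n v = 0 := by
  obtain ⟨m, rfl⟩ : ∃ m, n = m + p := ⟨n - p, by omega⟩
  have hz : bP k ℓ p ξ p v = 0 := by
    have := rel_eq (@Rel.bNil k _ ℓ p _ _ ξ v)
    simpa [bP] using this
  rw [← bP_concat m p v, hz, mul_zero]

lemma bP_mul_Aa (t : ℕ) (v : ZMod ℓ × ZMod p) :
    bP k ℓ p ξ t (v + (1, ξ)) * Aa k ℓ p ξ v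
      = Aa k ℓ p ξ (v + ((0 : ZMod ℓ), (t : ZMod p))) * bP k ℓ p ξ t v := by
  induction t with
  | zero =>
      rw [bP_zero_eq, Ee_mul_Aa, bP_zero_eq]
      rw [show v + ((0 : ZMod ℓ), ((0 : ℕ) : ZMod p)) = v from by simp, Aa_mul_Ee]
  | succ t ih =>
      rw [bP_succ, mul_assoc, ih, ← mul_assoc]
      have h1 : v + (1, ξ) + ((0 : ZMod ℓ), (t : ZMod p))
          = v + ((0 : ZMod ℓ), (t : ZMod p)) + (1, ξ) := by
        simp only [addpair]; exact vadd_eq v (by ring) (by ring)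
      rw [h1, comm_gen, mul_assoc, ← bP_succ]
      congr 2
      simp only [addpair]
      exact vadd_eq v (by ring) (by push_cast; ring)

lemma bP_mul_aP (t s : ℕ) (v : ZMod ℓ × ZMod p) :
    bP k ℓ p ξ t (v + ((s : ZMod ℓ), (s : ZMod p) * ξ)) * aP k ℓ p ξ s v
      = aP k ℓ p ξ s (v + ((0 : ZMod ℓ), (t : ZMod p))) * bP k ℓ p ξ t v := by
  induction s with
  | zero =>
      rw [show v + (((0:ℕ) : ZMod ℓ), ((0:ℕ) : ZMod p) * ξ) = v from by simp,
        aP_zero_eq, aP_zero_eq, bP_mul_Ee, Ee_mul_bP]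
  | succ s ih =>
      rw [aP_succ, ← mul_assoc]
      have h1 : v + (((s+1 : ℕ) : ZMod ℓ), ((s+1 : ℕ) : ZMod p) * ξ)
          = v + ((s : ZMod ℓ), (s : ZMod p) * ξ) + (1, ξ) := by
        simp only [addpair]; exact vadd_eq v (by push_cast; ring) (by push_cast; ring)
      have h2 : v + ((s : ZMod ℓ), (s : ZMod p) * ξ) + ((0 : ZMod ℓ), (t : ZMod p))
          = v + ((0 : ZMod ℓ), (t : ZMod p)) + ((s : ZMod ℓ), (s : ZMod p) * ξ) := by
        simp only [addpair]; exact vadd_eq v (by ring) (by ring)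
      rw [h1, bP_mul_Aa, mul_assoc, ih, ← mul_assoc, aP_succ, h2]

/-- The image in the bound quiver algebra of the path `a^s b^t` starting at `v`. -/
noncomputable def Pq (v : ZMod ℓ × ZMod p) (s t : ℕ) : BoundQuiverAlgebra k ℓ p ξ :=
  aP k ℓ p ξ s (v + ((0 : ZMod ℓ), (t : ZMod p))) * bP k ℓ p ξ t v

lemma Pq_mul_Ee (v : ZMod ℓ × ZMod p) (s t : ℕ) :
    (Pq v s t : BoundQuiverAlgebra k ℓ p ξ) * Ee k ℓ p ξ v = Pq v s t := by
  rw [Pq, mul_assoc, bP_mul_Ee]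

lemma Ee_mul_Pq (v : ZMod ℓ × ZMod p) (s t : ℕ) :
    Ee k ℓ p ξ (v + ((s : ZMod ℓ), (s : ZMod p) * ξ + (t : ZMod p))) * Pq v s t
      = (Pq v s t : BoundQuiverAlgebra k ℓ p ξ) := by
  rw [Pq, ← mul_assoc]
  have h1 : v + ((s : ZMod ℓ), (s : ZMod p) * ξ + (t : ZMod p))
      = v + ((0 : ZMod ℓ), (t : ZMod p)) + ((s : ZMod ℓ), (s : ZMod p) * ξ) := by
    simp only [addpair]; exact vadd_eq v (by ring) (by ring)
  rw [h1, Ee_mul_aP]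

lemma Pq_mul_Pq_of (w : ZMod ℓ × ZMod p) (s t s' t' : ℕ) :
    (Pq (w + ((s' : ZMod ℓ), (s' : ZMod p) * ξ + (t' : ZMod p))) s t :
        BoundQuiverAlgebra k ℓ p ξ) * Pq w s' t' = Pq w (s + s') (t + t') := by
  rw [Pq, Pq, Pq, mul_assoc, ← mul_assoc (bP k ℓ p ξ t _)]
  have h1 : w + ((s' : ZMod ℓ), (s' : ZMod p) * ξ + (t' : ZMod p))
      = w + ((0 : ZMod ℓ), (t' : ZMod p)) + ((s' : ZMod ℓ), (s' : ZMod p) * ξ) := by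
    simp only [addpair]; exact vadd_eq w (by ring) (by ring)
  rw [h1, bP_mul_aP]
  have h3 : w + ((0 : ZMod ℓ), (t' : ZMod p)) + ((0 : ZMod ℓ), (t : ZMod p))
      = w + ((0 : ZMod ℓ), ((t + t' : ℕ) : ZMod p)) := by
    simp only [addpair]; exact vadd_eq w (by ring) (by push_cast; ring)
  have h2 : w + ((0 : ZMod ℓ), (t' : ZMod p)) + ((s' : ZMod ℓ), (s' : ZMod p) * ξ)
        + ((0 : ZMod ℓ), (t : ZMod p))
      = w + ((0 : ZMod ℓ), ((t + t' : ℕ) : ZMod p)) + ((s' : ZMod ℓ), (s' : ZMod p) * ξ) := by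
    simp only [addpair]
    exact vadd_eq w (by ring) (by push_cast; ring)
  rw [h2, h3, mul_assoc (aP k ℓ p ξ s' _), ← mul_assoc (aP k ℓ p ξ s _),
    aP_concat, bP_concat]

lemma Pq_mul_Pq_ne {v w : ZMod ℓ × ZMod p} (s t s' t' : ℕ)
    (h : v ≠ w + ((s' : ZMod ℓ), (s' : ZMod p) * ξ + (t' : ZMod p))) :
    (Pq v s t : BoundQuiverAlgebra k ℓ p ξ) * Pq w s' t' = 0 := by
  rw [← Pq_mul_Ee v s t, ← Ee_mul_Pq w s' t', mul_assoc, ← mul_assoc (Ee k ℓ p ξ v),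
    Ee_mul_Ee_ne h, zero_mul, mul_zero]

end Stmt14

namespace Stmt14

variable {k : Type*} [Field k] {ℓ p : ℕ} [NeZero ℓ] [NeZero p] {ξ : ZMod p}

lemma Pq_zero_zero (v : ZMod ℓ × ZMod p) :
    (Pq v 0 0 : BoundQuiverAlgebra k ℓ p ξ) = Ee k ℓ p ξ v := by
  rw [Pq, aP_zero_eq, bP_zero_eq,
    show v + ((0 : ZMod ℓ), ((0 : ℕ) : ZMod p)) = v from by simp, Ee_mul_Ee_self]

lemma Pq_one_zero (v : ZMod ℓ × ZMod p) :
    (Pq v 1 0 : BoundQuiverAlgebra k ℓ p ξ) = Aa k ℓ p ξ v := by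
  rw [Pq, bP_zero_eq, show v + ((0 : ZMod ℓ), ((0 : ℕ) : ZMod p)) = v from by simp,
    show (1 : ℕ) = 0 + 1 from rfl, aP_succ, aP_zero_eq,
    show v + (((0:ℕ) : ZMod ℓ), ((0:ℕ) : ZMod p) * ξ) = v from by simp,
    Aa_mul_Ee, Aa_mul_Ee]

lemma Pq_zero_one (v : ZMod ℓ × ZMod p) :
    (Pq v 0 1 : BoundQuiverAlgebra k ℓ p ξ) = Bb k ℓ p ξ v := by
  rw [Pq, aP_zero_eq, show (1 : ℕ) = 0 + 1 from rfl, bP_succ, bP_zero_eq,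
    show v + ((0 : ZMod ℓ), ((0:ℕ) : ZMod p)) = v from by simp, Bb_mul_Ee,
    show ((0 + 1 : ℕ) : ZMod p) = (1 : ZMod p) from by norm_num, Ee_mul_Bb]

lemma Pq_eq_zero_a {s : ℕ} (hs : ℓ ≤ s) (v : ZMod ℓ × ZMod p) (t : ℕ) :
    (Pq v s t : BoundQuiverAlgebra k ℓ p ξ) = 0 := by
  rw [Pq, aP_eq_zero hs, zero_mul]

lemma Pq_eq_zero_b {t : ℕ} (ht : p ≤ t) (v : ZMod ℓ × ZMod p) (s : ℕ) :
    (Pq v s t : BoundQuiverAlgebra k ℓ p ξ) = 0 := by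
  rw [Pq, bP_eq_zero ht, mul_zero]

variable (k ℓ p ξ)

/-- The spanning family indexed by vertex and bounded exponents. -/
noncomputable def F (x : (ZMod ℓ × ZMod p) × Fin ℓ × Fin p) : BoundQuiverAlgebra k ℓ p ξ :=
  Pq x.1 x.2.1.val x.2.2.val

variable {k ℓ p ξ}

lemma span_F : Submodule.span k (Set.range (F k ℓ p ξ)) = ⊤ := by
  set S := Submodule.span k (Set.range (F k ℓ p ξ)) with hS
  have hPq : ∀ (v : ZMod ℓ × ZMod p) (s t : ℕ), (Pq v s t : BoundQuiverAlgebra k ℓ p ξ) ∈ S := by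
    intro v s t
    by_cases hs : s < ℓ
    · by_cases ht : t < p
      · exact Submodule.subset_span ⟨(v, ⟨s, hs⟩, ⟨t, ht⟩), rfl⟩
      · rw [Pq_eq_zero_b (by omega)]; exact S.zero_mem
    · rw [Pq_eq_zero_a (by omega)]; exact S.zero_mem
  have hone : (1 : BoundQuiverAlgebra k ℓ p ξ) ∈ S := by
    rw [← sum_Ee (k := k) (ℓ := ℓ) (p := p) (ξ := ξ)]
    exact Submodule.sum_mem _ fun v _ => by rw [← Pq_zero_zero]; exact hPq v 0 0
  have hmul : ∀ x ∈ S, ∀ y ∈ S, x * y ∈ S := by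
    intro x hx
    induction hx using Submodule.span_induction with
    | mem x hxr =>
        intro y hy
        induction hy using Submodule.span_induction with
        | mem y hyr =>
            obtain ⟨⟨v, s, t⟩, rfl⟩ := hxr
            obtain ⟨⟨w, s', t'⟩, rfl⟩ := hyr
            by_cases h : v = w + ((s'.val : ZMod ℓ), (s'.val : ZMod p) * ξ + (t'.val : ZMod p))
            · rw [F, F, h, Pq_mul_Pq_of]; exact hPq _ _ _
            · rw [F, F, Pq_mul_Pq_ne _ _ _ _ h]; exact S.zero_mem
        | zero => rw [mul_zero]; exact S.zero_mem
        | add y z _ _ hy hz => rw [mul_add]; exact S.add_mem hy hz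
        | smul c y _ hy => rw [mul_smul_comm]; exact S.smul_mem c hy
    | zero => intro y hy; rw [zero_mul]; exact S.zero_mem
    | add x z _ _ hx hz => intro y hy; rw [add_mul]; exact S.add_mem (hx y hy) (hz y hy)
    | smul c x _ hx => intro y hy; rw [smul_mul_assoc]; exact S.smul_mem c (hx y hy)
  rw [eq_top_iff]
  intro z hz; clear hz
  obtain ⟨x, rfl⟩ := RingQuot.mkAlgHom_surjective k (Rel k ℓ p ξ) z
  have hx : x ∈ Algebra.adjoin k (Set.range (FreeAlgebra.ι k (X := Gen ℓ p))) := by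
    rw [FreeAlgebra.adjoin_range_ι]; trivial
  induction hx using Algebra.adjoin_induction with
  | mem x hxr =>
      obtain ⟨gx, rfl⟩ := hxr
      cases gx with
      | e v => rw [show RingQuot.mkAlgHom k (Rel k ℓ p ξ) (FreeAlgebra.ι k (Gen.e v))
            = Ee k ℓ p ξ v from rfl, ← Pq_zero_zero]; exact hPq v 0 0
      | a v => rw [show RingQuot.mkAlgHom k (Rel k ℓ p ξ) (FreeAlgebra.ι k (Gen.a v))
            = Aa k ℓ p ξ v from rfl, ← Pq_one_zero]; exact hPq v 1 0
      | b v => rw [show RingQuot.mkAlgHom k (Rel k ℓ p ξ) (FreeAlgebra.ι k (Gen.b v))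
            = Bb k ℓ p ξ v from rfl, ← Pq_zero_one]; exact hPq v 0 1
  | algebraMap r =>
      rw [AlgHom.commutes, Algebra.algebraMap_eq_smul_one]
      exact S.smul_mem r hone
  | add x y _ _ hx hy => rw [map_add]; exact S.add_mem hx hy
  | mul x y _ _ hx hy => rw [map_mul]; exact hmul _ hx _ hy

end Stmt14

namespace Stmt14

variable (k : Type*) [Field k] (ℓ p : ℕ) [NeZero ℓ] [NeZero p] (ξ : ZMod p)

/-- The vector space underlying the representation used for the dimension lower bound. -/
abbrev Vsp : Type _ := ((ZMod ℓ × ZMod p) × ℕ × ℕ) → k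

variable {ℓ p}

/-- Head vertex of the formal path `a^s b^t` starting at `m.1`. -/
def hd (m : (ZMod ℓ × ZMod p) × ℕ × ℕ) : ZMod ℓ × ZMod p :=
  m.1 + ((m.2.1 : ZMod ℓ), (m.2.1 : ZMod p) * ξ + (m.2.2 : ZMod p))

variable {k ξ}

omit [NeZero ℓ] [NeZero p] in
lemma hd_succ_s (w : ZMod ℓ × ZMod p) (s t : ℕ) :
    hd ξ (w, s + 1, t) = hd ξ (w, s, t) + (1, ξ) := by
  simp only [hd, addpair]
  exact vadd_eq w (by push_cast; ring) (by push_cast; ring)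

omit [NeZero ℓ] [NeZero p] in
lemma hd_succ_t (w : ZMod ℓ × ZMod p) (s t : ℕ) :
    hd ξ (w, s, t + 1) = hd ξ (w, s, t) + (0, 1) := by
  simp only [hd, addpair]
  exact vadd_eq w (by push_cast; ring) (by push_cast; ring)

omit [NeZero ℓ] [NeZero p] in
lemma hd_shift_s {n s : ℕ} (h : n ≤ s) (w : ZMod ℓ × ZMod p) (t : ℕ) :
    hd ξ (w, s, t) = hd ξ (w, s - n, t) + ((n : ZMod ℓ), (n : ZMod p) * ξ) := by
  simp only [hd, addpair]
  refine vadd_eq w ?_ ?_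
  · rw [Nat.cast_sub h]; ring
  · rw [Nat.cast_sub h]; ring

omit [NeZero ℓ] [NeZero p] in
lemma hd_shift_t {n t : ℕ} (h : n ≤ t) (w : ZMod ℓ × ZMod p) (s : ℕ) :
    hd ξ (w, s, t) = hd ξ (w, s, t - n) + ((0 : ZMod ℓ), (n : ZMod p)) := by
  simp only [hd, addpair]
  refine vadd_eq w (by ring) ?_
  rw [Nat.cast_sub h]; ring

omit [NeZero ℓ] [NeZero p] in
@[simp] lemma hd_zero_zero (w : ZMod ℓ × ZMod p) : hd ξ (w, 0, 0) = w := by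
  simp [hd]

omit [NeZero ℓ] [NeZero p] in
lemma hd_zero (w : ZMod ℓ × ZMod p) (t : ℕ) :
    hd ξ (w, 0, t) = w + ((0 : ZMod ℓ), (t : ZMod p)) := by
  simp [hd]

variable (k ξ)

/-- Action of the idempotent `e v`. -/
noncomputable def Eop (v : ZMod ℓ × ZMod p) : Module.End k (Vsp k ℓ p) where
  toFun f := fun m => if hd ξ m = v then f m else 0
  map_add' f g := by funext m; by_cases h : hd ξ m = v <;> simp [h]
  map_smul' c f := by funext m; by_cases h : hd ξ m = v <;> simp [h]

def AopFun (v : ZMod ℓ × ZMod p) (f : Vsp k ℓ p) : Vsp k ℓ p := fun m =>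
  match m with
  | (_, 0, _) => 0
  | (w, s+1, t) => if hd ξ (w, s, t) = v ∧ s + 1 < ℓ then f (w, s, t) else 0

def BopFun (v : ZMod ℓ × ZMod p) (f : Vsp k ℓ p) : Vsp k ℓ p := fun m =>
  match m with
  | (_, _, 0) => 0
  | (w, s, t+1) => if hd ξ (w, s, t) = v ∧ t + 1 < p then f (w, s, t) else 0

variable {k ξ}

@[simp] lemma Eop_apply (v : ZMod ℓ × ZMod p) (f : Vsp k ℓ p) (m) :
    Eop k ξ v f m = if hd ξ m = v then f m else 0 := rfl

@[simp] lemma AopFun_zero (v : ZMod ℓ × ZMod p) (f : Vsp k ℓ p) (w t) :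
    AopFun k ξ v f (w, 0, t) = 0 := rfl

@[simp] lemma AopFun_succ (v : ZMod ℓ × ZMod p) (f : Vsp k ℓ p) (w s t) :
    AopFun k ξ v f (w, s + 1, t)
      = if hd ξ (w, s, t) = v ∧ s + 1 < ℓ then f (w, s, t) else 0 := rfl

@[simp] lemma BopFun_zero (v : ZMod ℓ × ZMod p) (f : Vsp k ℓ p) (w s) :
    BopFun k ξ v f (w, s, 0) = 0 := rfl

@[simp] lemma BopFun_succ (v : ZMod ℓ × ZMod p) (f : Vsp k ℓ p) (w s t) :
    BopFun k ξ v f (w, s, t + 1)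
      = if hd ξ (w, s, t) = v ∧ t + 1 < p then f (w, s, t) else 0 := rfl

variable (k ξ)

/-- Action of the arrow `a v`. -/
noncomputable def Aop (v : ZMod ℓ × ZMod p) : Module.End k (Vsp k ℓ p) where
  toFun := AopFun k ξ v
  map_add' f g := by
    funext m
    obtain ⟨w, s, t⟩ := m
    cases s with
    | zero => simp
    | succ s => simp only [AopFun_succ, Pi.add_apply]; split_ifs <;> simp
  map_smul' c f := by
    funext m
    obtain ⟨w, s, t⟩ := m
    cases s with
    | zero => simp
    | succ s => simp only [AopFun_succ, Pi.smul_apply, RingHom.id_apply]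
                split_ifs <;> simp

/-- Action of the arrow `b v`. -/
noncomputable def Bop (v : ZMod ℓ × ZMod p) : Module.End k (Vsp k ℓ p) where
  toFun := BopFun k ξ v
  map_add' f g := by
    funext m
    obtain ⟨w, s, t⟩ := m
    cases t with
    | zero => simp
    | succ t => simp only [BopFun_succ, Pi.add_apply]; split_ifs <;> simp
  map_smul' c f := by
    funext m
    obtain ⟨w, s, t⟩ := m
    cases t with
    | zero => simp
    | succ t => simp only [BopFun_succ, Pi.smul_apply, RingHom.id_apply]
                split_ifs <;> simp

variable {k ξ}

@[simp] lemma Aop_apply (v : ZMod ℓ × ZMod p) (f : Vsp k ℓ p) :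
    Aop k ξ v f = AopFun k ξ v f := rfl

@[simp] lemma Bop_apply (v : ZMod ℓ × ZMod p) (f : Vsp k ℓ p) :
    Bop k ξ v f = BopFun k ξ v f := rfl

variable (k ℓ p ξ)

/-- The representation of the generators. -/
noncomputable def act : Gen ℓ p → Module.End k (Vsp k ℓ p)
  | .e v => Eop k ξ v
  | .a v => Aop k ξ v
  | .b v => Bop k ξ v

noncomputable def ρ0 : FreeAlgebra k (Gen ℓ p) →ₐ[k] Module.End k (Vsp k ℓ p) :=
  FreeAlgebra.lift k (act k ℓ p ξ)

variable {k ℓ p ξ}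

@[simp] lemma ρ0_e (v : ZMod ℓ × ZMod p) :
    ρ0 k ℓ p ξ (g k ℓ p (Gen.e v)) = Eop k ξ v := by
  rw [ρ0, g, FreeAlgebra.lift_ι_apply]; rfl

@[simp] lemma ρ0_a (v : ZMod ℓ × ZMod p) :
    ρ0 k ℓ p ξ (g k ℓ p (Gen.a v)) = Aop k ξ v := by
  rw [ρ0, g, FreeAlgebra.lift_ι_apply]; rfl

@[simp] lemma ρ0_b (v : ZMod ℓ × ZMod p) :
    ρ0 k ℓ p ξ (g k ℓ p (Gen.b v)) = Bop k ξ v := by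
  rw [ρ0, g, FreeAlgebra.lift_ι_apply]; rfl

end Stmt14

namespace Stmt14

set_option linter.unusedSectionVars false
set_option linter.unusedTactic false
set_option maxHeartbeats 1000000

variable {k : Type*} [Field k] {ℓ p : ℕ} [NeZero ℓ] [NeZero p] {ξ : ZMod p}

lemma rho_aPath (n : ℕ) (v : ZMod ℓ × ZMod p) (f : Vsp k ℓ p) (w : ZMod ℓ × ZMod p) (s t : ℕ) :
    ρ0 k ℓ p ξ (aPath k ℓ p ξ n v) f (w, s, t)
      = if n ≤ s ∧ hd ξ (w, s - n, t) = v ∧ (n = 0 ∨ s < ℓ)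
        then f (w, s - n, t) else 0 := by
  induction n generalizing s with
  | zero =>
      rw [aPath, ρ0_e]
      simp only [Eop_apply, Nat.sub_zero]
      by_cases h : hd ξ (w, s, t) = v <;> simp [h]
  | succ n ih =>
      rw [aPath, map_mul]
      simp only [Module.End.mul_apply, ρ0_a, Aop_apply]
      cases s with
      | zero =>
          rw [AopFun_zero, if_neg]
          rintro ⟨h1, -⟩; omega
      | succ s =>
          rw [AopFun_succ, ih, show s + 1 - (n + 1) = s - n from by omega]
          by_cases hD : n ≤ s ∧ hd ξ (w, s - n, t) = v ∧ s + 1 < ℓ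
          · obtain ⟨h1, h2, h3⟩ := hD
            have hh : hd ξ (w, s, t) = v + ((n : ZMod ℓ), (n : ZMod p) * ξ) := by
              rw [hd_shift_s h1, h2]
            rw [if_pos ⟨hh, h3⟩, if_pos ⟨h1, h2, Or.inr (by omega)⟩,
              if_pos ⟨by omega, h2, Or.inr h3⟩]
          · have hQ : ¬(n + 1 ≤ s + 1 ∧ hd ξ (w, s - n, t) = v ∧ (n + 1 = 0 ∨ s + 1 < ℓ)) := by
              rintro ⟨q1, q2, q3⟩
              rcases q3 with h | h
              · omega
              · exact hD ⟨by omega, q2, h⟩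
            rw [if_neg hQ]
            by_cases hP1 : hd ξ (w, s, t) = v + ((n : ZMod ℓ), (n : ZMod p) * ξ) ∧ s + 1 < ℓ
            · rw [if_pos hP1, if_neg]
              rintro ⟨q1, q2, -⟩
              exact hD ⟨q1, q2, hP1.2⟩
            · rw [if_neg hP1]

lemma rho_bPath (n : ℕ) (v : ZMod ℓ × ZMod p) (f : Vsp k ℓ p) (w : ZMod ℓ × ZMod p) (s t : ℕ) :
    ρ0 k ℓ p ξ (bPath k ℓ p n v) f (w, s, t)
      = if n ≤ t ∧ hd ξ (w, s, t - n) = v ∧ (n = 0 ∨ t < p)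
        then f (w, s, t - n) else 0 := by
  induction n generalizing t with
  | zero =>
      rw [bPath, ρ0_e]
      simp only [Eop_apply, Nat.sub_zero]
      by_cases h : hd ξ (w, s, t) = v <;> simp [h]
  | succ n ih =>
      rw [bPath, map_mul]
      simp only [Module.End.mul_apply, ρ0_b, Bop_apply]
      cases t with
      | zero =>
          rw [BopFun_zero, if_neg]
          rintro ⟨h1, -⟩; omega
      | succ t =>
          rw [BopFun_succ, ih, show t + 1 - (n + 1) = t - n from by omega]
          by_cases hD : n ≤ t ∧ hd ξ (w, s, t - n) = v ∧ t + 1 < p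
          · obtain ⟨h1, h2, h3⟩ := hD
            have hh : hd ξ (w, s, t) = v + ((0 : ZMod ℓ), (n : ZMod p)) := by
              rw [hd_shift_t h1, h2]
            rw [if_pos ⟨hh, h3⟩, if_pos ⟨h1, h2, Or.inr (by omega)⟩,
              if_pos ⟨by omega, h2, Or.inr h3⟩]
          · have hQ : ¬(n + 1 ≤ t + 1 ∧ hd ξ (w, s, t - n) = v ∧ (n + 1 = 0 ∨ t + 1 < p)) := by
              rintro ⟨q1, q2, q3⟩
              rcases q3 with h | h
              · omega
              · exact hD ⟨by omega, q2, h⟩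
            rw [if_neg hQ]
            by_cases hP1 : hd ξ (w, s, t) = v + ((0 : ZMod ℓ), (n : ZMod p)) ∧ t + 1 < p
            · rw [if_pos hP1, if_neg]
              rintro ⟨q1, q2, -⟩
              exact hD ⟨q1, q2, hP1.2⟩
            · rw [if_neg hP1]

lemma ρ0_rel {x y : FreeAlgebra k (Gen ℓ p)} (h : Rel k ℓ p ξ x y) :
    ρ0 k ℓ p ξ x = ρ0 k ℓ p ξ y := by
  induction h with
  | orth v w hvw =>
      refine LinearMap.ext fun f => funext fun m => ?_
      simp only [map_mul, map_zero, Module.End.mul_apply, LinearMap.zero_apply, Pi.zero_apply,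
        ρ0_e, Eop_apply]
      split_ifs with h1 h2
      · exact absurd (h1.symm.trans h2) (by tauto)
      · rfl
      · rfl
  | idem v =>
      refine LinearMap.ext fun f => funext fun m => ?_
      simp only [map_mul, Module.End.mul_apply, ρ0_e, Eop_apply]
      split_ifs <;> rfl
  | unit =>
      refine LinearMap.ext fun f => funext fun m => ?_
      simp only [map_sum, map_one, LinearMap.sum_apply, Module.End.one_apply, ρ0_e]
      rw [Finset.sum_apply]
      simp only [Eop_apply]
      rw [Finset.sum_ite_eq Finset.univ (hd ξ m) (fun _ => f m)]
      simp
  | aArrow v =>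
      refine LinearMap.ext fun f => funext fun m => ?_
      obtain ⟨w, s, t⟩ := m
      simp only [map_mul, Module.End.mul_apply, ρ0_e, ρ0_a, Aop_apply, Eop_apply]
      cases s with
      | zero => simp
      | succ s =>
          rw [AopFun_succ, AopFun_succ]
          by_cases hc : hd ξ (w, s, t) = v ∧ s + 1 < ℓ
          · have hh : hd ξ (w, s + 1, t) = v + (1, ξ) := by rw [hd_succ_s, hc.1]
            rw [if_pos hc, if_pos hh, if_pos hc, Eop_apply, if_pos hc.1]
          · rw [if_neg hc, if_neg hc]
            simp
  | bArrow v =>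
      refine LinearMap.ext fun f => funext fun m => ?_
      obtain ⟨w, s, t⟩ := m
      simp only [map_mul, Module.End.mul_apply, ρ0_e, ρ0_b, Bop_apply, Eop_apply]
      cases t with
      | zero => simp
      | succ t =>
          rw [BopFun_succ, BopFun_succ]
          by_cases hc : hd ξ (w, s, t) = v ∧ t + 1 < p
          · have hh : hd ξ (w, s, t + 1) = v + (0, 1) := by rw [hd_succ_t, hc.1]
            rw [if_pos hc, if_pos hh, if_pos hc, Eop_apply, if_pos hc.1]
          · rw [if_neg hc, if_neg hc]
            simp
  | comm v =>
      refine LinearMap.ext fun f => funext fun m => ?_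
      obtain ⟨w, s, t⟩ := m
      simp only [map_mul, Module.End.mul_apply, ρ0_a, ρ0_b, Aop_apply, Bop_apply]
      match s, t with
      | 0, 0 => rfl
      | 0, t + 1 =>
          rw [BopFun_succ, AopFun_zero]
          simp only [AopFun_zero]
          split_ifs <;> rfl
      | s + 1, 0 =>
          rw [AopFun_succ, BopFun_zero]
          simp only [BopFun_zero]
          split_ifs <;> rfl
      | s + 1, t + 1 =>
          rw [BopFun_succ, AopFun_succ, AopFun_succ, BopFun_succ]
          by_cases h1 : hd ξ (w, s, t) = v
          · have e1 : hd ξ (w, s + 1, t) = v + (1, ξ) := by rw [hd_succ_s, h1]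
            have e2 : hd ξ (w, s, t + 1) = v + (0, 1) := by rw [hd_succ_t, h1]
            by_cases h2 : s + 1 < ℓ <;> by_cases h3 : t + 1 < p <;>
              simp [e1, e2, h1, h2, h3]
          · have e1 : hd ξ (w, s + 1, t) ≠ v + (1, ξ) := by
              rw [hd_succ_s]; exact fun hq => h1 (by exact add_right_cancel hq)
            have e2 : hd ξ (w, s, t + 1) ≠ v + (0, 1) := by
              rw [hd_succ_t]; exact fun hq => h1 (by exact add_right_cancel hq)
            simp [e1, e2, h1]
  | aNil v =>
      refine LinearMap.ext fun f => funext fun m => ?_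
      obtain ⟨w, s, t⟩ := m
      rw [rho_aPath, map_zero, if_neg]
      · simp
      · rintro ⟨h1, -, h3⟩
        rcases h3 with h | h
        · exact absurd h (NeZero.ne ℓ)
        · omega
  | bNil v =>
      refine LinearMap.ext fun f => funext fun m => ?_
      obtain ⟨w, s, t⟩ := m
      rw [rho_bPath, map_zero, if_neg]
      · simp
      · rintro ⟨h1, -, h3⟩
        rcases h3 with h | h
        · exact absurd h (NeZero.ne p)
        · omega

variable (k ℓ p ξ)

noncomputable def ρ : BoundQuiverAlgebra k ℓ p ξ →ₐ[k] Module.End k (Vsp k ℓ p) :=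
  RingQuot.liftAlgHom k ⟨ρ0 k ℓ p ξ, fun _ _ h => ρ0_rel h⟩

variable {k ℓ p ξ}

lemma ρ_π (x : FreeAlgebra k (Gen ℓ p)) : ρ k ℓ p ξ (π k ℓ p ξ x) = ρ0 k ℓ p ξ x :=
  RingQuot.liftAlgHom_mkAlgHom_apply _ _ _ _

end Stmt14

namespace Stmt14

set_option linter.unusedSectionVars false
set_option maxHeartbeats 1000000

variable {k : Type*} [Field k] {ℓ p : ℕ} [NeZero ℓ] [NeZero p] {ξ : ZMod p}

/-- Delta function at a basis index. -/
def δf (k : Type*) [Field k] {ℓ p : ℕ} (m0 : (ZMod ℓ × ZMod p) × ℕ × ℕ) : Vsp k ℓ p :=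
  fun m => if m = m0 then 1 else 0

omit [NeZero ℓ] [NeZero p] in
lemma triple_eq {w' v : ZMod ℓ × ZMod p} {s' s t' t : ℕ}
    (h : ((w' : ZMod ℓ × ZMod p), s', t') = (v, s, t)) : w' = v ∧ s' = s ∧ t' = t :=
  ⟨congrArg Prod.fst h, congrArg (fun x => x.2.1) h, congrArg (fun x => x.2.2) h⟩

lemma rho_bP_delta (t : ℕ) (ht : t < p) (v w : ZMod ℓ × ZMod p) :
    ρ0 k ℓ p ξ (bPath k ℓ p t v) (δf k (w, 0, 0)) = if v = w then δf k (w, 0, t) else 0 := by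
  funext m
  obtain ⟨w', s', t''⟩ := m
  rw [rho_bPath]
  by_cases hvw : v = w
  · subst hvw
    rw [if_pos rfl]
    by_cases hm : ((w' : ZMod ℓ × ZMod p), s', t'') = (v, 0, t)
    · obtain ⟨rfl, rfl, rfl⟩ := triple_eq hm
      rw [if_pos ⟨le_refl _, by rw [Nat.sub_self]; exact hd_zero_zero _, Or.inr ht⟩]
      simp [δf]
    · rw [show δf k (v, 0, t) (w', s', t'') = 0 from if_neg hm]
      split_ifs with hc
      · rw [δf, if_neg]
        intro heq
        obtain ⟨rfl, rfl, h3⟩ := triple_eq heq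
        exact hm (by
          have : t'' = t := by omega
          rw [this])
      · rfl
  · rw [if_neg hvw]
    simp only [Pi.zero_apply]
    split_ifs with hc
    · by_cases harg : ((w' : ZMod ℓ × ZMod p), s', t'' - t) = (w, 0, 0)
      · exfalso
        apply hvw
        have hx := hc.2.1
        rw [harg, hd_zero_zero] at hx
        exact hx.symm
      · rw [δf, if_neg harg]
    · rfl

lemma rho_aP_delta (s : ℕ) (hs : s < ℓ) (v w : ZMod ℓ × ZMod p) (t : ℕ) :
    ρ0 k ℓ p ξ (aPath k ℓ p ξ s v) (δf k (w, 0, t))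
      = if v = hd ξ (w, 0, t) then δf k (w, s, t) else 0 := by
  funext m
  obtain ⟨w', s'', t''⟩ := m
  rw [rho_aPath]
  by_cases hvw : v = hd ξ (w, 0, t)
  · subst hvw
    rw [if_pos rfl]
    by_cases hm : ((w' : ZMod ℓ × ZMod p), s'', t'') = (w, s, t)
    · obtain ⟨rfl, rfl, rfl⟩ := triple_eq hm
      rw [if_pos ⟨le_refl _, by rw [Nat.sub_self], Or.inr hs⟩]
      simp [δf]
    · rw [show δf k (w, s, t) (w', s'', t'') = 0 from if_neg hm]
      split_ifs with hc
      · rw [δf, if_neg]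
        intro heq
        obtain ⟨rfl, h2, rfl⟩ := triple_eq heq
        exact hm (by
          have : s'' = s := by omega
          rw [this])
      · rfl
  · rw [if_neg hvw]
    simp only [Pi.zero_apply]
    split_ifs with hc
    · by_cases harg : ((w' : ZMod ℓ × ZMod p), s'' - s, t'') = (w, 0, t)
      · exfalso
        apply hvw
        have hx := hc.2.1
        rw [harg] at hx
        exact hx.symm
      · rw [δf, if_neg harg]
    · rfl

lemma rho_F_delta (i : (ZMod ℓ × ZMod p) × Fin ℓ × Fin p) (w : ZMod ℓ × ZMod p) :
    ρ k ℓ p ξ (F k ℓ p ξ i) (δf k (w, 0, 0))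
      = if i.1 = w then δf k (w, i.2.1.val, i.2.2.val) else 0 := by
  obtain ⟨v, s, t⟩ := i
  have hF : F k ℓ p ξ (v, s, t)
      = π k ℓ p ξ (aPath k ℓ p ξ s.val (v + ((0 : ZMod ℓ), (t.val : ZMod p)))
          * bPath k ℓ p t.val v) := by
    rw [F, Pq, aP, bP, map_mul]
  rw [hF, ρ_π, map_mul, Module.End.mul_apply, rho_bP_delta t.val t.isLt]
  by_cases hvw : v = w
  · subst hvw
    rw [if_pos rfl, if_pos rfl, rho_aP_delta s.val s.isLt, if_pos (by rw [hd_zero])]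
  · rw [if_neg hvw, if_neg hvw, map_zero]

lemma F_linearIndependent : LinearIndependent k (F k ℓ p ξ) := by
  rw [Fintype.linearIndependent_iff]
  intro c hc i0
  obtain ⟨v0, s0, t0⟩ := i0
  have h2 : (∑ i, c i • ρ k ℓ p ξ (F k ℓ p ξ i)) = 0 := by
    have := congrArg (ρ k ℓ p ξ) hc
    rw [map_sum] at this
    simp only [map_smul, map_zero] at this
    exact this
  have h3 : (∑ i, c i • (ρ k ℓ p ξ (F k ℓ p ξ i) (δf k ((v0 : ZMod ℓ × ZMod p), 0, 0))
      ((v0 : ZMod ℓ × ZMod p), s0.val, t0.val))) = 0 := by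
    have h4 := congrFun (congrArg
      (fun T : Module.End k (Vsp k ℓ p) => T (δf k ((v0 : ZMod ℓ × ZMod p), 0, 0))) h2)
      ((v0 : ZMod ℓ × ZMod p), s0.val, t0.val)
    simpa [LinearMap.sum_apply, LinearMap.smul_apply, Finset.sum_apply, Pi.smul_apply] using h4
  simp only [rho_F_delta] at h3
  rw [Finset.sum_eq_single ((v0, s0, t0) : (ZMod ℓ × ZMod p) × Fin ℓ × Fin p)] at h3
  · simpa [δf] using h3
  · intro i _ hne
    obtain ⟨v, s, t⟩ := i
    by_cases hv : v = v0
    · subst hv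
      rw [if_pos rfl, show δf k ((v : ZMod ℓ × ZMod p), s.val, t.val)
          ((v : ZMod ℓ × ZMod p), s0.val, t0.val) = 0 from if_neg (by
        intro heq
        obtain ⟨-, h2', h3'⟩ := triple_eq heq
        apply hne
        have hs : s0 = s := Fin.val_injective h2'
        have ht : t0 = t := Fin.val_injective h3'
        rw [hs, ht]), smul_zero]
    · rw [if_neg hv]
      simp
  · simp

variable (k ℓ p ξ)

noncomputable def basF : Module.Basis ((ZMod ℓ × ZMod p) × Fin ℓ × Fin p) k
    (BoundQuiverAlgebra k ℓ p ξ) :=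
  Module.Basis.mk F_linearIndependent (span_F.ge)

lemma finrank_BQA : Module.finrank k (BoundQuiverAlgebra k ℓ p ξ) = ℓ ^ 2 * p ^ 2 := by
  rw [Module.finrank_eq_card_basis (basF k ℓ p ξ), Fintype.card_prod, Fintype.card_prod,
    Fintype.card_prod, ZMod.card, ZMod.card, Fintype.card_fin, Fintype.card_fin]
  ring

end Stmt14



theorem stmt_14 (k : Type*) [Field k] (ℓ p : ℕ) (hℓ : 1 < ℓ) (hp : 3 ≤ p) (ξ : ZMod p) :
    letI : NeZero ℓ := ⟨by omega⟩
    letI : NeZero p := ⟨by omega⟩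
    Module.finrank k (Stmt14.BoundQuiverAlgebra k ℓ p ξ) = ℓ ^ 2 * p ^ 2 := by
  letI : NeZero ℓ := ⟨by omega⟩
  letI : NeZero p := ⟨by omega⟩
  exact Stmt14.finrank_BQA k ℓ p ξ
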